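/- Let q ≥ 2 be an integer and let i, i', j, j', k, k' be integers with 1 ≤ i, i', j, j', k, k' and 2i ≤ q, 2i' ≤ q, 2j ≤ q, 2j' ≤ q, 2k ≤ q, 2k' ≤ q. Then (2q⁶ + iq − k) + (7q⁶ + jq² + k') + (10q⁶ − j'q² − i'q) = 19q⁶ if and only if i = i', j = j', and k = k'. -/
import Mathlib


/-- Let `q ≥ 2` be an integer and let `i, i', j, j', k, k'` be integers
with `1 ≤ i, i', j, j', k, k'` and `2i ≤ q`, `2i' ≤ q`, `2j ≤ q`, `2j' ≤ q`,
`2k ≤ q`, `2k' ≤ q`. Then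
`(2q⁶ + iq − k) + (7q⁶ + jq² + k') + (10q⁶ − j'q² − i'q) = 19q⁶`
if and only if `i = i'`, `j = j'`, and `k = k'`. -/
theorem hulett_sum_iff_indices_match (q i i' j j' k k' : ℤ) (hq : 2 ≤ q)
    (hi : 1 ≤ i) (hi' : 1 ≤ i') (hj : 1 ≤ j) (hj' : 1 ≤ j')
    (hk : 1 ≤ k) (hk' : 1 ≤ k')
    (hiq : 2 * i ≤ q) (hi'q : 2 * i' ≤ q) (hjq : 2 * j ≤ q) (hj'q : 2 * j' ≤ q)
    (hkq : 2 * k ≤ q) (hk'q : 2 * k' ≤ q) :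
    (2 * q ^ 6 + i * q - k) + (7 * q ^ 6 + j * q ^ 2 + k') +
      (10 * q ^ 6 - j' * q ^ 2 - i' * q) = 19 * q ^ 6 ↔
    i = i' ∧ j = j' ∧ k = k' := by
  have hq0 : (0:ℤ) < q := by linarith
  constructor
  · intro h
    have key : (j - j') * q ^ 2 + ((i - i') * q + (k' - k)) = 0 := by
      linear_combination h
    have hbnd : (i - i') * q + (k' - k) < q ^ 2 ∧ -(q ^ 2) < (i - i') * q + (k' - k) := by
      constructor <;> nlinarith [mul_le_mul_of_nonneg_right hiq hq0.le,
        mul_le_mul_of_nonneg_right hi'q hq0.le, sq_nonneg q, mul_pos hq0 hq0]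
    have hjj : j = j' := by
      rcases lt_trichotomy j j' with h1 | h1 | h1
      · exfalso
        have : j - j' ≤ -1 := by linarith
        nlinarith [hbnd.1, hbnd.2]
      · exact h1
      · exfalso
        have : 1 ≤ j - j' := by linarith
        nlinarith [hbnd.1, hbnd.2]
    subst hjj
    have key2 : (i - i') * q + (k' - k) = 0 := by linarith [key]
    have hii : i = i' := by
      rcases lt_trichotomy i i' with h1 | h1 | h1
      · exfalso
        have : i - i' ≤ -1 := by linarith
        nlinarith
      · exact h1
      · exfalso
        have : 1 ≤ i - i' := by linarith
        nlinarith
    subst hii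
    refine ⟨rfl, rfl, by linarith [key2]⟩
  · rintro ⟨rfl, rfl, rfl⟩
    ring
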